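/- The map δ ↦ z∗(δ) implicitly defined by the boundary system is strictly increasing: if (z₁, A₁) and (z₂, A₂) both solve the system with perturbations δ₁ < δ₂ respectively, A₁, A₂ > 0, z₁, z₂ ∈ [0, 1), and additionally A·tanh((A/(2v))(1−z)) = 1 pins down A as a function of z, then z₁ < z₂. -/
import Mathlib

lemma tanh_lt_tanh' {x y : ℝ} (h : x < y) : Real.tanh x < Real.tanh y := by
  rw [Real.tanh_eq_sinh_div_cosh, Real.tanh_eq_sinh_div_cosh,
    div_lt_div_iff₀ (Real.cosh_pos x) (Real.cosh_pos y)]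
  have : Real.sinh (x - y) < 0 := Real.sinh_neg_iff.2 (by linarith)
  rw [Real.sinh_sub] at this
  linarith

lemma tanh_le_tanh' {x y : ℝ} (h : x ≤ y) : Real.tanh x ≤ Real.tanh y := by
  rcases eq_or_lt_of_le h with rfl | h
  · exact le_rfl
  · exact (tanh_lt_tanh' h).le

lemma tanh_pos' {x : ℝ} (h : 0 < x) : 0 < Real.tanh x := by
  simpa using tanh_lt_tanh' h

/-- The transition-layer location is strictly increasing in the perturbation:
if `(z₁, A₁)` and `(z₂, A₂)` solve the boundary system with `δ₁ < δ₂`,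
`A₁, A₂ > 0`, `z₁, z₂ ∈ [0, 1)`, then `z₁ < z₂`. -/
theorem shock_location_strict_mono_in_delta
    (v δ₁ δ₂ z₁ z₂ A₁ A₂ : ℝ) (hv : 0 < v) (hδ : δ₁ < δ₂)
    (hA₁ : 0 < A₁) (hA₂ : 0 < A₂)
    (hz₁ : z₁ ∈ Set.Ico (0 : ℝ) 1) (hz₂ : z₂ ∈ Set.Ico (0 : ℝ) 1)
    (h11 : A₁ * Real.tanh ((A₁ / (2 * v)) * (1 - z₁)) = 1)
    (h12 : A₁ * Real.tanh ((A₁ / (2 * v)) * (1 + z₁)) = 1 + δ₁)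
    (h21 : A₂ * Real.tanh ((A₂ / (2 * v)) * (1 - z₂)) = 1)
    (h22 : A₂ * Real.tanh ((A₂ / (2 * v)) * (1 + z₂)) = 1 + δ₂) :
    z₁ < z₂ := by
  obtain ⟨hz₁0, hz₁1⟩ := hz₁
  obtain ⟨hz₂0, hz₂1⟩ := hz₂
  have h2v : (0:ℝ) < 2 * v := by linarith
  by_contra hle
  push_neg at hle  -- z₂ ≤ z₁
  -- Step 1: A₂ ≤ A₁
  have hA : A₂ ≤ A₁ := by
    by_contra hA
    push_neg at hA  -- A₁ < A₂
    have harg : (A₁ / (2 * v)) * (1 - z₁) < (A₂ / (2 * v)) * (1 - z₂) := by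
      have h1 : A₁ / (2 * v) < A₂ / (2 * v) := by gcongr
      have h2 : (0:ℝ) < 1 - z₁ := by linarith
      have h3 : 1 - z₁ ≤ 1 - z₂ := by linarith
      have h4 : (0:ℝ) < A₁ / (2 * v) := div_pos hA₁ h2v
      nlinarith
    have htp : 0 < Real.tanh ((A₁ / (2 * v)) * (1 - z₁)) :=
      tanh_pos' (mul_pos (div_pos hA₁ h2v) (by linarith))
    have := mul_lt_mul hA (tanh_lt_tanh' harg).le htp hA₂.le
    linarith
  -- Step 2: contradiction via second equations
  have harg2 : (A₂ / (2 * v)) * (1 + z₂) ≤ (A₁ / (2 * v)) * (1 + z₁) := by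
    have h1 : A₂ / (2 * v) ≤ A₁ / (2 * v) := by gcongr
    have h2 : (0:ℝ) ≤ 1 + z₂ := by linarith
    have h3 : 1 + z₂ ≤ 1 + z₁ := by linarith
    have h4 : (0:ℝ) ≤ A₂ / (2 * v) := (div_pos hA₂ h2v).le
    nlinarith
  have htp2 : 0 ≤ Real.tanh ((A₂ / (2 * v)) * (1 + z₂)) :=
    (tanh_pos' (mul_pos (div_pos hA₂ h2v) (by linarith))).le
  have hmul : A₂ * Real.tanh ((A₂ / (2 * v)) * (1 + z₂)) ≤
      A₁ * Real.tanh ((A₁ / (2 * v)) * (1 + z₁)) :=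
    mul_le_mul hA (tanh_le_tanh' harg2) htp2 hA₁.le
  linarith
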